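/- arXiv:2001.04220 — 3 statements merged into one kernel-verified Lean document; each statement's English description precedes it below -/
import Mathlib

section
/- For every natural number n, ∫₀^∞ |log ρ|^n e^{−ρ²} ρ dρ ≤ √2 · n!. -/
open Real Set MeasureTheory

-- x^n ≤ n! * exp x for x ≥ 0
lemma pow_le_factorial_mul_exp {x : ℝ} (hx : 0 ≤ x) (n : ℕ) :
    x ^ n ≤ n.factorial * Real.exp x := by
  have h1 : x ^ n / n.factorial ≤ Real.exp x :=
    le_trans (Finset.single_le_sum (f := fun i => x ^ i / i.factorial)
      (fun i _ => by positivity) (Finset.self_mem_range_succ n))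
      (Real.sum_le_exp_of_nonneg hx (n + 1))
  have hn : (0:ℝ) < n.factorial := by positivity
  rw [div_le_iff₀ hn] at h1
  linarith

lemma moment_eq (n : ℕ) :
    ∫ x in Ioi (0:ℝ), x ^ (2*n+1) * Real.exp (-x ^ 2) = 1 / 2 * n.factorial := by
  have h := integral_rpow_mul_exp_neg_rpow (p := 2) (q := (2*n+1 : ℕ)) (by norm_num)
    (by have : (0:ℝ) ≤ ((2*n+1:ℕ):ℝ) := Nat.cast_nonneg _; linarith)
  have heq : ∀ x : ℝ, x ^ ((2*n+1 : ℕ) : ℝ) * Real.exp (-x ^ (2:ℝ)) =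
      x ^ (2*n+1) * Real.exp (-x ^ 2) := by
    intro x
    rw [Real.rpow_natCast, show (2:ℝ) = ((2:ℕ):ℝ) by norm_num, Real.rpow_natCast]
  simp_rw [heq] at h
  rw [h]
  have : (((2*n+1 : ℕ):ℝ) + 1) / 2 = (n:ℝ) + 1 := by push_cast; ring
  rw [this, Real.Gamma_nat_eq_factorial]

lemma moment_integrable (n : ℕ) :
    IntegrableOn (fun x : ℝ => x ^ (2*n+1) * Real.exp (-x ^ 2)) (Ioi 0) := by
  have h := integrableOn_rpow_mul_exp_neg_rpow (s := (2*n+1 : ℕ)) (p := 2)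
    (by have : (0:ℝ) ≤ ((2*n+1:ℕ):ℝ) := Nat.cast_nonneg _; linarith) two_pos
  refine h.congr_fun (fun x _ => ?_) measurableSet_Ioi
  dsimp only
  rw [Real.rpow_natCast, show (2:ℝ) = ((2:ℕ):ℝ) by norm_num, Real.rpow_natCast]

/-- For every natural number `n`,
`∫₀^∞ |log ρ|^n e^{−ρ²} ρ dρ ≤ √2 · n!`. -/
theorem integral_abs_log_pow_weight_one (n : ℕ) :
    ∫ ρ in Set.Ioi (0 : ℝ), |Real.log ρ| ^ n * Real.exp (-ρ ^ 2) * ρ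
      ≤ Real.sqrt 2 * n.factorial := by
  set F : ℝ → ℝ := fun ρ => |Real.log ρ| ^ n * Real.exp (-ρ ^ 2) * ρ with hF
  have hsqrt : (5/4 : ℝ) ≤ Real.sqrt 2 := by
    nlinarith [Real.sq_sqrt (by norm_num : (0:ℝ) ≤ 2), Real.sqrt_nonneg 2]
  have hFmeas : Measurable F := by
    measurability
  -- the dominating function on Ioi 1
  set G : ℝ → ℝ := fun x => (1/2) ^ n * (x ^ (2*n+1) * Real.exp (-x ^ 2)) with hG
  have hGint : IntegrableOn G (Ioi 0) := (moment_integrable n).const_mul _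
  have hGnonneg : ∀ x ∈ Ioi (0:ℝ), 0 ≤ G x := fun x hx => by
    have : (0:ℝ) < x := hx
    positivity
  have hGval : ∫ x in Ioi (0:ℝ), G x = (1/2) ^ n * (1/2 * n.factorial) := by
    rw [hG, integral_const_mul, moment_eq]
  -- pointwise bound on Ioi 1
  have hFG : ∀ ρ ∈ Ioi (1:ℝ), F ρ ≤ G ρ := by
    intro ρ hρ
    have h1 : (1:ℝ) < ρ := hρ
    have hlog : |Real.log ρ| = Real.log ρ := abs_of_nonneg (Real.log_nonneg h1.le)
    have h2 : Real.log ρ ≤ ρ ^ 2 / 2 := by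
      have := Real.log_le_sub_one_of_pos (by linarith : (0:ℝ) < ρ)
      nlinarith
    have h3 : |Real.log ρ| ^ n ≤ (ρ ^ 2 / 2) ^ n := by
      rw [hlog]; exact pow_le_pow_left₀ (Real.log_nonneg h1.le) h2 n
    have h4 : (ρ ^ 2 / 2) ^ n = (1/2)^n * ρ ^ (2*n) := by
      rw [div_pow, ← pow_mul, one_div, inv_pow]; ring
    have hexp : (0:ℝ) < Real.exp (-ρ ^ 2) := Real.exp_pos _
    have hρ0 : (0:ℝ) < ρ := by linarith
    calc F ρ = |Real.log ρ| ^ n * (Real.exp (-ρ ^ 2) * ρ) := by rw [hF]; ring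
      _ ≤ (1/2)^n * ρ ^ (2*n) * (Real.exp (-ρ ^ 2) * ρ) := by
          rw [← h4]; exact mul_le_mul_of_nonneg_right h3 (by positivity)
      _ = G ρ := by rw [hG]; rw [pow_succ]; ring
  -- F nonneg on Ioi 0
  have hFnonneg : ∀ ρ ∈ Ioi (0:ℝ), 0 ≤ F ρ := fun ρ hρ => by
    have : (0:ℝ) < ρ := hρ
    positivity
  -- integrability on the two pieces
  have hint1 : IntegrableOn F (Ioc 0 1) := by
    refine Integrable.mono (g := fun _ => (n.factorial : ℝ))
      (integrableOn_const measure_Ioc_lt_top.ne) hFmeas.aestronglyMeasurable.restrict ?_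
    refine (ae_restrict_iff' measurableSet_Ioc).2 (ae_of_all _ fun ρ hρ => ?_)
    obtain ⟨hρ0, hρ1⟩ := hρ
    have hbound : F ρ ≤ n.factorial := by
      have hlog : |Real.log ρ| = -Real.log ρ := abs_of_nonpos (Real.log_nonpos hρ0.le hρ1)
      have h1 : |Real.log ρ| ^ n ≤ n.factorial * Real.exp (|Real.log ρ|) :=
        pow_le_factorial_mul_exp (abs_nonneg _) n
      have h2 : Real.exp (|Real.log ρ|) = ρ⁻¹ := by
        rw [hlog, Real.exp_neg, Real.exp_log hρ0]
      have h3 : |Real.log ρ| ^ n * ρ ≤ n.factorial := by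
        have := mul_le_mul_of_nonneg_right h1 hρ0.le
        rw [h2] at this
        calc |Real.log ρ| ^ n * ρ ≤ n.factorial * ρ⁻¹ * ρ := this
          _ = n.factorial := by field_simp
      have hexp1 : Real.exp (-ρ ^ 2) ≤ 1 := Real.exp_le_one_iff.2 (by nlinarith)
      calc F ρ = |Real.log ρ| ^ n * ρ * Real.exp (-ρ ^ 2) := by rw [hF]; ring
        _ ≤ n.factorial * 1 := by
            refine mul_le_mul h3 hexp1 (Real.exp_pos _).le (by positivity)
        _ = n.factorial := mul_one _
    rw [Real.norm_eq_abs, Real.norm_eq_abs, abs_of_nonneg (hFnonneg ρ hρ0),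
      abs_of_nonneg (by positivity)]
    exact hbound
  have hint2 : IntegrableOn F (Ioi 1) := by
    refine Integrable.mono (hGint.mono_set (Ioi_subset_Ioi zero_le_one))
      hFmeas.aestronglyMeasurable.restrict ?_
    refine (ae_restrict_iff' measurableSet_Ioi).2 (ae_of_all _ fun ρ hρ => ?_)
    have h0 : (0:ℝ) < ρ := lt_trans zero_lt_one hρ
    rw [Real.norm_eq_abs, Real.norm_eq_abs, abs_of_nonneg (hFnonneg ρ h0),
      abs_of_nonneg (hGnonneg ρ h0)]
    exact hFG ρ hρ
  -- split the integral
  have hsplit : ∫ ρ in Ioi (0:ℝ), F ρ =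
      (∫ ρ in Ioc (0:ℝ) 1, F ρ) + ∫ ρ in Ioi (1:ℝ), F ρ := by
    rw [← setIntegral_union (Ioc_disjoint_Ioi le_rfl) measurableSet_Ioi hint1 hint2,
      Ioc_union_Ioi_eq_Ioi zero_le_one]
  -- bound piece A
  have hA : ∫ ρ in Ioc (0:ℝ) 1, F ρ ≤ n.factorial := by
    calc ∫ ρ in Ioc (0:ℝ) 1, F ρ ≤ ∫ _ in Ioc (0:ℝ) 1, (n.factorial : ℝ) := by
          refine setIntegral_mono_on hint1 (integrableOn_const measure_Ioc_lt_top.ne)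
            measurableSet_Ioc fun ρ hρ => ?_
          obtain ⟨hρ0, hρ1⟩ := hρ
          -- same bound as above
          have hlog : |Real.log ρ| = -Real.log ρ := abs_of_nonpos (Real.log_nonpos hρ0.le hρ1)
          have h1 : |Real.log ρ| ^ n ≤ n.factorial * Real.exp (|Real.log ρ|) :=
            pow_le_factorial_mul_exp (abs_nonneg _) n
          have h2 : Real.exp (|Real.log ρ|) = ρ⁻¹ := by
            rw [hlog, Real.exp_neg, Real.exp_log hρ0]
          have h3 : |Real.log ρ| ^ n * ρ ≤ n.factorial := by
            have := mul_le_mul_of_nonneg_right h1 hρ0.le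
            rw [h2] at this
            calc |Real.log ρ| ^ n * ρ ≤ n.factorial * ρ⁻¹ * ρ := this
              _ = n.factorial := by field_simp
          have hexp1 : Real.exp (-ρ ^ 2) ≤ 1 := Real.exp_le_one_iff.2 (by nlinarith)
          calc F ρ = |Real.log ρ| ^ n * ρ * Real.exp (-ρ ^ 2) := by rw [hF]; ring
            _ ≤ n.factorial * 1 :=
                mul_le_mul h3 hexp1 (Real.exp_pos _).le (by positivity)
            _ = n.factorial := mul_one _
      _ = n.factorial := by simp
  -- bound piece B
  have hB : ∫ ρ in Ioi (1:ℝ), F ρ ≤ (1/2) ^ n * (1/2 * n.factorial) := by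
    calc ∫ ρ in Ioi (1:ℝ), F ρ ≤ ∫ ρ in Ioi (1:ℝ), G ρ :=
          setIntegral_mono_on hint2 (hGint.mono_set (Ioi_subset_Ioi zero_le_one))
            measurableSet_Ioi hFG
      _ ≤ ∫ ρ in Ioi (0:ℝ), G ρ := by
          refine setIntegral_mono_set hGint ?_
            (HasSubset.Subset.eventuallyLE (Ioi_subset_Ioi zero_le_one))
          exact (ae_restrict_iff' measurableSet_Ioi).2 (ae_of_all _ hGnonneg)
      _ = (1/2) ^ n * (1/2 * n.factorial) := hGval
  -- combine
  have hfac : (1:ℝ) ≤ n.factorial := by exact_mod_cast n.factorial_pos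
  rcases Nat.eq_zero_or_pos n with rfl | hn
  · -- n = 0 : the integral equals 1/2
    have : ∫ ρ in Ioi (0:ℝ), F ρ = 1/2 * (Nat.factorial 0 : ℝ) := by
      rw [← moment_eq 0]
      refine setIntegral_congr_fun measurableSet_Ioi fun ρ _ => ?_
      simp [hF]; ring
    rw [show (∫ ρ in Set.Ioi (0 : ℝ), |Real.log ρ| ^ 0 * Real.exp (-ρ ^ 2) * ρ)
      = ∫ ρ in Ioi (0:ℝ), F ρ from rfl, this]
    simp only [Nat.factorial_zero, Nat.cast_one, mul_one]
    linarith
  · have hpow : ((1:ℝ)/2) ^ n ≤ 1/2 := by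
      calc ((1:ℝ)/2) ^ n ≤ (1/2) ^ 1 :=
        pow_le_pow_of_le_one (by norm_num) (by norm_num) hn
        _ = 1/2 := pow_one _
    have : ∫ ρ in Ioi (0:ℝ), F ρ ≤ n.factorial + (1/2) ^ n * (1/2 * n.factorial) := by
      rw [hsplit]; linarith
    refine le_trans this ?_
    have hfac0 : (0:ℝ) ≤ n.factorial := by positivity
    nlinarith [mul_le_mul_of_nonneg_right hpow (by positivity : (0:ℝ) ≤ 1/2 * n.factorial)]
end

section
/- For every natural number n, ∫₀^∞ |log r|^n e^{−r²} r³ dr ≤ ((4√6 + 9√2)⁄12) · n!. -/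
open Real Set MeasureTheory

/-- Pointwise bound: `|log r| ^ n ≤ n!/2^n * (r^2 + (r^2)⁻¹)` for `r > 0`. -/
lemma abs_log_pow_le {r : ℝ} (hr : 0 < r) (n : ℕ) :
    |Real.log r| ^ n ≤ (n.factorial : ℝ) / 2 ^ n * (r ^ 2 + (r ^ 2)⁻¹) := by
  have hr2 : (0 : ℝ) < r ^ 2 := by positivity
  have hx : (0 : ℝ) ≤ |Real.log (r ^ 2)| := abs_nonneg _
  have h1 : |Real.log (r ^ 2)| ^ n ≤ n.factorial * Real.exp (|Real.log (r ^ 2)|) :=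
    pow_le_factorial_mul_exp hx n
  have h2 : Real.exp (|Real.log (r ^ 2)|) ≤ r ^ 2 + (r ^ 2)⁻¹ := by
    rcases abs_cases (Real.log (r ^ 2)) with ⟨h, _⟩ | ⟨h, _⟩ <;> rw [h]
    · rw [Real.exp_log hr2]
      have : (0 : ℝ) ≤ (r ^ 2)⁻¹ := by positivity
      linarith
    · rw [Real.exp_neg, Real.exp_log hr2]
      have : (0 : ℝ) ≤ r ^ 2 := by positivity
      linarith
  have hlog : |Real.log (r ^ 2)| = 2 * |Real.log r| := by
    rw [Real.log_pow]
    simp [abs_mul]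
  have h3 : (2 : ℝ) ^ n * |Real.log r| ^ n ≤ n.factorial * (r ^ 2 + (r ^ 2)⁻¹) := by
    calc (2 : ℝ) ^ n * |Real.log r| ^ n = |Real.log (r ^ 2)| ^ n := by
          rw [hlog, mul_pow]
      _ ≤ n.factorial * Real.exp (|Real.log (r ^ 2)|) := h1
      _ ≤ n.factorial * (r ^ 2 + (r ^ 2)⁻¹) := by
          have : (0 : ℝ) ≤ (n.factorial : ℝ) := by positivity
          exact mul_le_mul_of_nonneg_left h2 this
  have h2n : (0 : ℝ) < 2 ^ n := by positivity
  rw [div_mul_eq_mul_div, le_div_iff₀ h2n]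
  linarith [h3]

lemma integrableOn_pow_mul_exp_neg_sq (k : ℕ) :
    IntegrableOn (fun r : ℝ => r ^ k * Real.exp (-r ^ 2)) (Set.Ioi 0) := by
  have h := integrableOn_rpow_mul_exp_neg_mul_sq (b := 1) one_pos
    (s := (k : ℝ)) (by have : (0:ℝ) ≤ k := Nat.cast_nonneg k; linarith)
  refine h.congr_fun (fun x hx => ?_) measurableSet_Ioi
  simp only [Real.rpow_natCast]
  norm_num

lemma integral_pow_mul_exp_neg_sq (k : ℕ) :
    ∫ r in Set.Ioi (0 : ℝ), r ^ k * Real.exp (-r ^ 2)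
      = 1 / 2 * Real.Gamma ((k + 1) / 2) := by
  rw [← integral_rpow_mul_exp_neg_rpow (p := 2) (q := (k : ℝ)) two_pos (by have : (0:ℝ) ≤ k := Nat.cast_nonneg k; linarith)]
  refine setIntegral_congr_fun measurableSet_Ioi (fun x hx => ?_)
  rw [Real.rpow_natCast, Real.rpow_two]

/-- For every natural number `n`,
`∫₀^∞ |log r|^n e^{−r²} r³ dr ≤ ((4√6 + 9√2)/12) · n!`. -/
theorem integral_abs_log_pow_weight_cube (n : ℕ) :
    ∫ r in Set.Ioi (0 : ℝ), |Real.log r| ^ n * Real.exp (-r ^ 2) * r ^ 3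
      ≤ (4 * Real.sqrt 6 + 9 * Real.sqrt 2) / 12 * n.factorial := by
  set C : ℝ := (n.factorial : ℝ) / 2 ^ n with hC
  have hC0 : 0 ≤ C := by positivity
  -- dominating function
  set g : ℝ → ℝ := fun r => C * (r ^ 5 * Real.exp (-r ^ 2) + r ^ 1 * Real.exp (-r ^ 2)) with hg
  have hgint : IntegrableOn g (Set.Ioi 0) := by
    exact (((integrableOn_pow_mul_exp_neg_sq 5).add (integrableOn_pow_mul_exp_neg_sq 1)).const_mul C)
  have hle : ∀ r ∈ Set.Ioi (0 : ℝ),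
      |Real.log r| ^ n * Real.exp (-r ^ 2) * r ^ 3 ≤ g r := by
    intro r hr
    have hr0 : (0 : ℝ) < r := hr
    have h1 := abs_log_pow_le hr0 n
    have hexp : (0 : ℝ) < Real.exp (-r ^ 2) := Real.exp_pos _
    have hr3 : (0 : ℝ) < r ^ 3 := by positivity
    have : |Real.log r| ^ n * Real.exp (-r ^ 2) * r ^ 3
        ≤ C * (r ^ 2 + (r ^ 2)⁻¹) * Real.exp (-r ^ 2) * r ^ 3 := by
      have := mul_le_mul_of_nonneg_right h1 (le_of_lt (mul_pos hexp hr3))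
      calc |Real.log r| ^ n * Real.exp (-r ^ 2) * r ^ 3
          = |Real.log r| ^ n * (Real.exp (-r ^ 2) * r ^ 3) := by ring
        _ ≤ C * (r ^ 2 + (r ^ 2)⁻¹) * (Real.exp (-r ^ 2) * r ^ 3) := this
        _ = C * (r ^ 2 + (r ^ 2)⁻¹) * Real.exp (-r ^ 2) * r ^ 3 := by ring
    refine this.trans (le_of_eq ?_)
    have hr2 : (r : ℝ) ^ 2 ≠ 0 := by positivity
    field_simp [hg]
    ring
  have hnonneg : ∀ r ∈ Set.Ioi (0 : ℝ),
      0 ≤ |Real.log r| ^ n * Real.exp (-r ^ 2) * r ^ 3 := by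
    intro r hr
    have : (0 : ℝ) < r := hr
    positivity
  have hmono : ∫ r in Set.Ioi (0 : ℝ), |Real.log r| ^ n * Real.exp (-r ^ 2) * r ^ 3
      ≤ ∫ r in Set.Ioi (0 : ℝ), g r := by
    refine integral_mono_of_nonneg ?_ hgint ?_
    · exact (ae_restrict_iff' measurableSet_Ioi).2 (Filter.Eventually.of_forall hnonneg)
    · exact (ae_restrict_iff' measurableSet_Ioi).2 (Filter.Eventually.of_forall hle)
  have hgval : ∫ r in Set.Ioi (0 : ℝ), g r = C * (3 / 2) := by
    rw [hg]
    rw [integral_const_mul, integral_add (integrableOn_pow_mul_exp_neg_sq 5)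
      (integrableOn_pow_mul_exp_neg_sq 1), integral_pow_mul_exp_neg_sq,
      integral_pow_mul_exp_neg_sq]
    have h3 : ((5 : ℕ) + 1 : ℝ) / 2 = 3 := by norm_num
    have h1 : ((1 : ℕ) + 1 : ℝ) / 2 = 1 := by norm_num
    rw [h3, h1, Real.Gamma_one]
    have : Real.Gamma 3 = 2 := by
      rw [show (3 : ℝ) = (2 : ℕ) + 1 by norm_num, Real.Gamma_nat_eq_factorial]
      norm_num
    rw [this]
    ring
  have hCle : C ≤ (n.factorial : ℝ) := by
    rw [hC]
    have h1 : (1 : ℝ) ≤ 2 ^ n := one_le_pow₀ (by norm_num)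
    exact div_le_self (Nat.cast_nonneg _) h1
  have hconst : (3 : ℝ) / 2 ≤ (4 * Real.sqrt 6 + 9 * Real.sqrt 2) / 12 := by
    have h6 : Real.sqrt 6 ^ 2 = 6 := Real.sq_sqrt (by norm_num)
    have h2 : Real.sqrt 2 ^ 2 = 2 := Real.sq_sqrt (by norm_num)
    have h6' : (2.4 : ℝ) ≤ Real.sqrt 6 := by
      have h := Real.sqrt_le_sqrt (show (5.76 : ℝ) ≤ 6 by norm_num)
      rwa [show (5.76 : ℝ) = 2.4 ^ 2 by norm_num, Real.sqrt_sq (by norm_num)] at h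
    have h2' : (1.4 : ℝ) ≤ Real.sqrt 2 := by
      have h := Real.sqrt_le_sqrt (show (1.96 : ℝ) ≤ 2 by norm_num)
      rwa [show (1.96 : ℝ) = 1.4 ^ 2 by norm_num, Real.sqrt_sq (by norm_num)] at h
    linarith
  calc ∫ r in Set.Ioi (0 : ℝ), |Real.log r| ^ n * Real.exp (-r ^ 2) * r ^ 3
      ≤ C * (3 / 2) := hmono.trans_eq hgval
    _ ≤ (n.factorial : ℝ) * (3 / 2) := by nlinarith
    _ ≤ (4 * Real.sqrt 6 + 9 * Real.sqrt 2) / 12 * n.factorial := by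
        have hf : (0 : ℝ) ≤ n.factorial := by positivity
        nlinarith [hconst]
end

section
/- Let (Ω, P) be a probability space and Y : Ω → ℝ a random variable such that E[|Y|^m] ≤ c (m+1)! M^m for all natural numbers m, where c > 0 and M > 0 are constants. Then for t = 1/(2M) one has E[e^{t|Y|}] ≤ 4c, and consequently P{|Y| ≥ a} ≤ 4c · e^{−a/(2M)} for every a > 0. -/
open MeasureTheory

/-- Large-deviation estimate: if a random variable `Y` on a probability space satisfies
`E[|Y|^m] ≤ c (m+1)! M^m` for all `m`, then with `t = 1/(2M)` one has
`E[e^{t|Y|}] ≤ 4c`, and consequently `P{|Y| ≥ a} ≤ 4c e^{−a/(2M)}` for every `a > 0`. -/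
theorem large_deviation_from_moments {Ω : Type*} [MeasurableSpace Ω]
    (P : Measure Ω) [IsProbabilityMeasure P]
    (Y : Ω → ℝ) (hY : Measurable Y) (c M : ℝ) (hc : 0 < c) (hM : 0 < M)
    (hmom : ∀ m : ℕ,
      ∫⁻ ω, ENNReal.ofReal (|Y ω| ^ m) ∂P
        ≤ ENNReal.ofReal (c * (m + 1).factorial * M ^ m)) :
    (∫⁻ ω, ENNReal.ofReal (Real.exp (|Y ω| / (2 * M))) ∂P ≤ ENNReal.ofReal (4 * c)) ∧
      ∀ a : ℝ, 0 < a →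
        P {ω | a ≤ |Y ω|} ≤ ENNReal.ofReal (4 * c * Real.exp (-a / (2 * M))) := by
  have h2M : (0:ℝ) < 2 * M := by linarith
  -- pointwise expansion of exp
  have hexp : ∀ x : ℝ, 0 ≤ x → ENNReal.ofReal (Real.exp x)
      = ∑' m : ℕ, ENNReal.ofReal (x ^ m / m.factorial) := by
    intro x hx
    rw [Real.exp_eq_exp_ℝ, NormedSpace.exp_eq_tsum_div]
    exact ENNReal.ofReal_tsum_of_nonneg (fun n => by positivity)
      (Real.summable_pow_div_factorial x)
  -- the geometric-type sum
  have hsum1 : Summable fun m : ℕ => (m : ℝ) * (1/2 : ℝ) ^ m := by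
    simpa using summable_pow_mul_geometric_of_norm_lt_one 1 (r := (1/2:ℝ)) (by norm_num)
  have hsum2 : Summable fun m : ℕ => (1/2 : ℝ) ^ m :=
    summable_geometric_of_lt_one (by norm_num) (by norm_num)
  have hsumf : Summable fun m : ℕ => c * (m + 1) * (1/2 : ℝ) ^ m := by
    have : (fun m : ℕ => c * (m + 1) * (1/2 : ℝ) ^ m)
        = fun m : ℕ => c * ((m : ℝ) * (1/2 : ℝ) ^ m) + c * ((1/2 : ℝ) ^ m) := by
      funext m; ring
    rw [this]
    exact (hsum1.mul_left c).add (hsum2.mul_left c)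
  have htsum : (∑' m : ℕ, c * (m + 1) * (1/2 : ℝ) ^ m) = 4 * c := by
    have h1 : (∑' m : ℕ, (m : ℝ) * (1/2 : ℝ) ^ m) = 2 := by
      rw [tsum_coe_mul_geometric_of_norm_lt_one (r := (1/2:ℝ)) (by norm_num)]
      norm_num
    have h2 : (∑' m : ℕ, (1/2 : ℝ) ^ m) = 2 := by
      rw [tsum_geometric_of_lt_one (by norm_num) (by norm_num)]
      norm_num
    have heq : (fun m : ℕ => c * (m + 1) * (1/2 : ℝ) ^ m)
        = fun m : ℕ => c * ((m : ℝ) * (1/2 : ℝ) ^ m) + c * ((1/2 : ℝ) ^ m) := by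
      funext m; ring
    rw [heq, Summable.tsum_add (hsum1.mul_left c) (hsum2.mul_left c), tsum_mul_left, tsum_mul_left,
      h1, h2]
    ring
  have key : ∫⁻ ω, ENNReal.ofReal (Real.exp (|Y ω| / (2 * M))) ∂P ≤ ENNReal.ofReal (4 * c) := by
    calc ∫⁻ ω, ENNReal.ofReal (Real.exp (|Y ω| / (2 * M))) ∂P
        = ∫⁻ ω, ∑' m : ℕ, ENNReal.ofReal ((|Y ω| / (2*M)) ^ m / m.factorial) ∂P :=
          lintegral_congr fun ω => hexp _ (by positivity)
      _ = ∑' m : ℕ, ∫⁻ ω, ENNReal.ofReal ((|Y ω| / (2*M)) ^ m / m.factorial) ∂P := by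
          refine lintegral_tsum fun m => ?_
          exact (ENNReal.measurable_ofReal.comp
            ((((hY.abs.div_const _).pow_const m).div_const _))).aemeasurable
      _ ≤ ∑' m : ℕ, ENNReal.ofReal (c * (m + 1) * (1/2 : ℝ) ^ m) := by
          refine ENNReal.tsum_le_tsum fun m => ?_
          have heq : ∀ ω, ENNReal.ofReal ((|Y ω| / (2*M)) ^ m / m.factorial)
              = ENNReal.ofReal ((1/(2*M))^m / m.factorial) * ENNReal.ofReal (|Y ω| ^ m) := by
            intro ω
            rw [← ENNReal.ofReal_mul (by positivity)]
            congr 1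
            rw [div_pow, div_pow]
            ring
          calc ∫⁻ ω, ENNReal.ofReal ((|Y ω| / (2*M)) ^ m / m.factorial) ∂P
              = ENNReal.ofReal ((1/(2*M))^m / m.factorial)
                  * ∫⁻ ω, ENNReal.ofReal (|Y ω| ^ m) ∂P := by
                simp_rw [heq]
                exact lintegral_const_mul _ (ENNReal.measurable_ofReal.comp
                  (hY.abs.pow_const m))
            _ ≤ ENNReal.ofReal ((1/(2*M))^m / m.factorial)
                  * ENNReal.ofReal (c * (m + 1).factorial * M ^ m) :=
                mul_le_mul_right (hmom m) _
            _ = ENNReal.ofReal (c * (m + 1) * (1/2 : ℝ) ^ m) := by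
                rw [← ENNReal.ofReal_mul (by positivity)]
                congr 1
                have hfac : ((m+1).factorial : ℝ) = (m + 1) * m.factorial := by
                  rw [Nat.factorial_succ]; push_cast; ring
                have hfm : (m.factorial : ℝ) ≠ 0 := by positivity
                field_simp [hfac]
                have hMm : (1/(2*M))^m * M^m = (1/2 : ℝ)^m := by
                  rw [← mul_pow, one_div, mul_inv, mul_assoc, inv_mul_cancel₀ hM.ne', mul_one, one_div]
                rw [hfac]
                linear_combination ((m:ℝ)+1) * (m.factorial : ℝ) * hMm
      _ = ENNReal.ofReal (4 * c) := by
          rw [← ENNReal.ofReal_tsum_of_nonneg (fun m => by positivity) hsumf, htsum]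
  refine ⟨key, fun a ha => ?_⟩
  set ε := ENNReal.ofReal (Real.exp (a / (2 * M))) with hε
  have hεpos : ε ≠ 0 := ne_of_gt (ENNReal.ofReal_pos.2 (Real.exp_pos _))
  have hεtop : ε ≠ ⊤ := ENNReal.ofReal_ne_top
  have hsub : {ω | a ≤ |Y ω|} ⊆ {ω | ε ≤ ENNReal.ofReal (Real.exp (|Y ω| / (2 * M)))} := by
    intro ω hω
    refine ENNReal.ofReal_le_ofReal (Real.exp_le_exp.2 ?_)
    gcongr
    exact hω
  have hmark : ε * P {ω | a ≤ |Y ω|} ≤ ENNReal.ofReal (4 * c) := by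
    calc ε * P {ω | a ≤ |Y ω|}
        ≤ ε * P {ω | ε ≤ ENNReal.ofReal (Real.exp (|Y ω| / (2 * M)))} :=
          mul_le_mul_right (measure_mono hsub) ε
      _ ≤ ∫⁻ ω, ENNReal.ofReal (Real.exp (|Y ω| / (2 * M))) ∂P :=
          mul_meas_ge_le_lintegral₀ ((ENNReal.measurable_ofReal.comp
            ((hY.abs.div_const _).exp)).aemeasurable) ε
      _ ≤ ENNReal.ofReal (4 * c) := key
  have : P {ω | a ≤ |Y ω|} ≤ ENNReal.ofReal (4 * c) * ε⁻¹ := by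
    rw [mul_comm] at hmark
    rw [← ENNReal.le_div_iff_mul_le (Or.inl hεpos) (Or.inl hεtop)] at hmark
    rwa [ENNReal.div_eq_inv_mul, mul_comm] at hmark
  refine this.trans_eq ?_
  rw [hε, ← ENNReal.ofReal_inv_of_pos (Real.exp_pos _), ← Real.exp_neg,
    ← ENNReal.ofReal_mul (by positivity), neg_div]
end
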